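/- Let 0 < ε < 1. Define G(u) = (1/2)·(∫₀^∞ [u(s)² - ε²]₊ / s² ds) / (∫₀^∞ u'(s)² ds) for u : [0,∞) → [0,1] increasing, absolutely continuous, with u(0)=0 and lim_{s→∞} u(s)=1, both integrals finite and the denominator positive. Then G(u) ≤ 2(1-ε²)/(1+ε²)². -/

import Mathlib

open Real Set MeasureTheory Filter

private lemma inv_sq_integrableOn {a : ℝ} (ha : 0 < a) :
    IntegrableOn (fun t : ℝ => 1 / t ^ 2) (Ioi a) := by
  have h := integrableOn_Ioi_rpow_of_lt (by norm_num : (-2:ℝ) < -1) ha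
  apply h.congr_fun (fun x hx => ?_) measurableSet_Ioi
  have hx0 : 0 < x := ha.trans hx
  show x ^ (-2:ℝ) = 1 / x ^ 2
  rw [show (-2:ℝ) = -((2:ℕ):ℝ) by norm_num, Real.rpow_neg hx0.le, Real.rpow_natCast, one_div]

private lemma inv_sq_integral {a : ℝ} (ha : 0 < a) :
    (∫ t in Ioi a, 1 / t ^ 2) = 1 / a := by
  have h := integral_Ioi_rpow_of_lt (by norm_num : (-2:ℝ) < -1) ha
  have h2 : (∫ t in Ioi a, 1 / t ^ 2) = ∫ t : ℝ in Ioi a, t ^ (-2:ℝ) := by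
    apply setIntegral_congr_fun measurableSet_Ioi
    intro x hx
    have hx0 : 0 < x := ha.trans hx
    show 1 / x ^ 2 = x ^ (-2:ℝ)
    rw [show (-2:ℝ) = -((2:ℕ):ℝ) by norm_num, Real.rpow_neg hx0.le, Real.rpow_natCast, one_div]
  rw [h2, h]
  norm_num [Real.rpow_neg_one]

private lemma cs_integral {μ : Measure ℝ} {f k : ℝ → ℝ}
    (hfm : AEStronglyMeasurable f μ) (hkm : AEStronglyMeasurable k μ)
    (hf2 : Integrable (fun x => f x ^ 2) μ) (hk2 : Integrable (fun x => k x ^ 2) μ)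
    (hfk0 : 0 ≤ᵐ[μ] fun x => f x * k x) :
    (∫ x, f x * k x ∂μ) ^ 2 ≤ (∫ x, f x ^ 2 ∂μ) * (∫ x, k x ^ 2 ∂μ) := by
  have hfk : Integrable (fun x => f x * k x) μ := by
    refine Integrable.mono (((hf2.add hk2)).div_const 2) (hfm.mul hkm) ?_
    filter_upwards with x
    have h2 : (0:ℝ) ≤ (f x ^ 2 + k x ^ 2) / 2 := by positivity
    simp only [Pi.add_apply, Real.norm_eq_abs]
    rw [abs_of_nonneg h2, abs_mul]
    nlinarith [sq_nonneg (|f x| - |k x|), sq_abs (f x), sq_abs (k x), abs_nonneg (f x),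
      abs_nonneg (k x)]
  set I := ∫ x, f x * k x ∂μ with hI
  set F := ∫ x, f x ^ 2 ∂μ with hF
  set K := ∫ x, k x ^ 2 ∂μ with hK
  have hFnn : 0 ≤ F := integral_nonneg fun x => sq_nonneg _
  have hKnn : 0 ≤ K := integral_nonneg fun x => sq_nonneg _
  have hInn : 0 ≤ I := integral_nonneg_of_ae hfk0
  have hc : ∀ c : ℝ, 0 < c → 2 * c * I ≤ c ^ 2 * F + K := by
    intro c hc
    have h1 : ∀ x, 2 * c * (f x * k x) ≤ c ^ 2 * f x ^ 2 + k x ^ 2 := by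
      intro x; nlinarith [sq_nonneg (c * f x - k x)]
    calc 2 * c * I = ∫ x, 2 * c * (f x * k x) ∂μ := by rw [integral_const_mul]
      _ ≤ ∫ x, (c ^ 2 * f x ^ 2 + k x ^ 2) ∂μ := by
          refine integral_mono (hfk.const_mul _) ((hf2.const_mul _).add hk2) h1
      _ = c ^ 2 * F + K := by rw [integral_add (hf2.const_mul _) hk2, integral_const_mul]
  rcases hInn.lt_or_eq with hIpos | hIzero
  · rcases hFnn.lt_or_eq with hFpos | hFzero
    · have h5 := hc (I / F) (by positivity)
      have h3 : (I/F)^2 * F = I^2 / F := by field_simp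
      have h4 : 2 * (I/F) * I = 2 * (I^2/F) := by field_simp
      have h2 : I ^ 2 / F ≤ K := by linarith
      calc I ^ 2 = I ^ 2 / F * F := by field_simp
        _ ≤ K * F := mul_le_mul_of_nonneg_right h2 hFnn
        _ = F * K := mul_comm _ _
    · exfalso
      have h5 := hc ((K + 1) / I) (div_pos (by linarith) hIpos)
      rw [← hFzero] at h5
      have h3 : 2 * ((K+1)/I) * I = 2 * (K+1) := by field_simp
      nlinarith
  · rw [← hIzero]
    simpa using mul_nonneg hFnn hKnn


set_option maxHeartbeats 2000000 in
theorem ZFK_bound (ε : ℝ) (hε0 : 0 < ε) (hε1 : ε < 1)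
    (u u' : ℝ → ℝ) (hmono : MonotoneOn u (Ici 0))
    (hmap : ∀ s : ℝ, 0 ≤ s → u s ∈ Icc (0 : ℝ) 1)
    (h0 : u 0 = 0) (hlim : Tendsto u atTop (nhds 1))
    (hftc : ∀ a b : ℝ, 0 ≤ a → 0 ≤ b → u b - u a = ∫ t in a..b, u' t)
    (hnum : IntegrableOn (fun s => max (u s ^ 2 - ε ^ 2) 0 / s ^ 2) (Ioi 0))
    (hden : IntegrableOn (fun s => u' s ^ 2) (Ioi 0))
    (hpos : 0 < ∫ s in Ioi (0 : ℝ), u' s ^ 2) :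
    (1 / 2) * (∫ s in Ioi (0 : ℝ), max (u s ^ 2 - ε ^ 2) 0 / s ^ 2) /
        (∫ s in Ioi (0 : ℝ), u' s ^ 2)
      ≤ 2 * (1 - ε ^ 2) / (1 + ε ^ 2) ^ 2 := by
  -- measurable pointwise-nonneg version `g` of `|u'|`
  obtain ⟨q, hqmeas, hqae⟩ : ∃ q : ℝ → ℝ, Measurable q ∧
      (fun s => u' s ^ 2) =ᵐ[volume.restrict (Ioi 0)] q :=
    ⟨hden.1.mk _, hden.1.stronglyMeasurable_mk.measurable, hden.1.ae_eq_mk⟩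
  set g : ℝ → ℝ := fun s => Real.sqrt (q s) with hgdef
  have hgmeas : Measurable g := Real.continuous_sqrt.measurable.comp hqmeas
  have hg0 : ∀ x, 0 ≤ g x := fun x => Real.sqrt_nonneg _
  have hgsq : (fun s => g s ^ 2) =ᵐ[volume.restrict (Ioi 0)] fun s => u' s ^ 2 := by
    filter_upwards [hqae] with x hx
    simp only [hgdef]
    rw [Real.sq_sqrt (hx ▸ sq_nonneg (u' x)), ← hx]
  have hgabs : g =ᵐ[volume.restrict (Ioi 0)] fun x => |u' x| := by
    filter_upwards [hqae] with x hx
    simp only [hgdef]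
    rw [← hx, Real.sqrt_sq_eq_abs]
  have hgsq_int : ∀ S : Set ℝ, S ⊆ Ioi 0 → IntegrableOn (fun s => g s ^ 2) S := by
    intro S hS
    exact (hden.mono_set hS).congr (ae_restrict_of_ae_restrict_of_subset hS hgsq.symm)
  have hgsq_eq : ∀ S : Set ℝ, S ⊆ Ioi 0 →
      (∫ s in S, g s ^ 2) = ∫ s in S, u' s ^ 2 := fun S hS =>
    integral_congr_ae (ae_restrict_of_ae_restrict_of_subset hS hgsq)
  have hg_int : ∀ A B : ℝ, 0 ≤ A → IntegrableOn g (Ioc A B) := by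
    intro A B hA
    have hsub : Ioc A B ⊆ Ioi 0 := fun x hx => lt_of_le_of_lt hA hx.1
    refine Integrable.mono (((hgsq_int _ hsub).add
      ((integrableOn_const_iff (C := (1:ℝ))).2 (Or.inr measure_Ioc_lt_top))).div_const 2)
      hgmeas.aestronglyMeasurable ?_
    filter_upwards with x
    simp only [Pi.add_apply, Real.norm_eq_abs]
    rw [abs_of_nonneg (hg0 x), abs_of_nonneg (by positivity : (0:ℝ) ≤ (g x ^ 2 + 1)/2)]
    nlinarith [sq_nonneg (g x - 1)]
  -- increments of u are bounded by integrals of g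
  have hinc : ∀ A B : ℝ, 0 ≤ A → A ≤ B → u B - u A ≤ ∫ t in Ioc A B, g t := by
    intro A B hA hAB
    have hsub : Ioc A B ⊆ Ioi 0 := fun x hx => lt_of_le_of_lt hA hx.1
    by_cases hii : IntervalIntegrable u' volume A B
    · have hu'int : IntegrableOn u' (Ioc A B) :=
        (intervalIntegrable_iff_integrableOn_Ioc_of_le hAB).1 hii
      rw [hftc A B hA (hA.trans hAB), intervalIntegral.integral_of_le hAB]
      calc (∫ t in Ioc A B, u' t) ≤ ∫ t in Ioc A B, |u' t| :=
            integral_mono hu'int hu'int.abs fun x => le_abs_self _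
        _ = ∫ t in Ioc A B, g t :=
            (integral_congr_ae (ae_restrict_of_ae_restrict_of_subset hsub hgabs)).symm
    · rw [hftc A B hA (hA.trans hAB), intervalIntegral.integral_undef hii]
      exact setIntegral_nonneg measurableSet_Ioc fun x _ => hg0 x
  -- Cauchy-Schwarz on intervals
  have hcs : ∀ A B : ℝ, 0 ≤ A → A ≤ B →
      (u B - u A) ^ 2 ≤ (B - A) * ∫ t in Ioc A B, g t ^ 2 := by
    intro A B hA hAB
    have hsub : Ioc A B ⊆ Ioi 0 := fun x hx => lt_of_le_of_lt hA hx.1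
    have h1 := hinc A B hA hAB
    have h2 : (∫ t in Ioc A B, g t * 1) ^ 2 ≤
        (∫ t in Ioc A B, g t ^ 2) * ∫ t in Ioc A B, (1:ℝ) ^ 2 := by
      refine cs_integral hgmeas.aestronglyMeasurable aestronglyMeasurable_const
        (hgsq_int _ hsub) ?_ ?_
      · simpa using (integrableOn_const_iff (C := (1:ℝ))).2 (Or.inr measure_Ioc_lt_top)
      · filter_upwards with x; simpa using hg0 x
    have h3 : (∫ t in Ioc A B, (1:ℝ) ^ 2) = B - A := by
      simp [Real.volume_Ioc, ENNReal.toReal_ofReal (sub_nonneg.2 hAB), hAB]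
    have h4 : (∫ t in Ioc A B, g t * 1) = ∫ t in Ioc A B, g t := by simp
    have h5 : 0 ≤ u B - u A :=
      sub_nonneg.2 (hmono (mem_Ici.2 hA) (mem_Ici.2 (hA.trans hAB)) hAB)
    have h6 : (u B - u A) ^ 2 ≤ (∫ t in Ioc A B, g t) ^ 2 :=
      pow_le_pow_left₀ h5 h1 2
    rw [h4, h3] at h2
    calc (u B - u A) ^ 2 ≤ (∫ t in Ioc A B, g t) ^ 2 := h6
      _ ≤ (∫ t in Ioc A B, g t ^ 2) * (B - A) := h2
      _ = (B - A) * ∫ t in Ioc A B, g t ^ 2 := mul_comm _ _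
  -- the crossing point a
  set Sset := {s : ℝ | 0 < s ∧ ε ≤ u s} with hSset
  have hSne : Sset.Nonempty := by
    have h1 : ∀ᶠ s in atTop, ε ≤ u s := hlim.eventually (eventually_ge_nhds hε1)
    have h2 : ∀ᶠ s : ℝ in atTop, 0 < s := eventually_gt_atTop 0
    obtain ⟨s, hs1, hs2⟩ := (h1.and h2).exists
    exact ⟨s, hs2, hs1⟩
  have hSbdd : BddBelow Sset := ⟨0, fun s hs => hs.1.le⟩
  set a := sInf Sset with hadef
  have ha0 : 0 ≤ a := le_csInf hSne fun s hs => hs.1.le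
  have hgea : ∀ s, a < s → ε ≤ u s := by
    intro s hs
    obtain ⟨x, hxS, hxs⟩ := (csInf_lt_iff hSbdd hSne).1 hs
    exact le_trans hxS.2 (hmono (mem_Ici.2 hxS.1.le)
      (mem_Ici.2 (hxS.1.le.trans hxs.le)) hxs.le)
  have hlta : ∀ s, 0 < s → s < a → u s < ε := by
    intro s h1 h2
    by_contra hcon
    push_neg at hcon
    exact absurd (csInf_le hSbdd ⟨h1, hcon⟩) (not_le.2 h2)
  have hapos : 0 < a := by
    rcases ha0.lt_or_eq with h | h
    · exact h
    exfalso
    set E1 := ∫ t in Ioc (0:ℝ) 1, g t ^ 2 with hE1def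
    have hE1nn : 0 ≤ E1 := setIntegral_nonneg measurableSet_Ioc fun x _ => sq_nonneg _
    set s₀ := min 1 (ε ^ 2 / (2 * (E1 + 1))) with hs₀def
    have hs₀pos : 0 < s₀ := lt_min one_pos (by positivity)
    have hs₀1 : s₀ ≤ 1 := min_le_left _ _
    have h1 : ε ≤ u s₀ := hgea s₀ (h ▸ hs₀pos)
    have h2 := hcs 0 s₀ le_rfl hs₀pos.le
    rw [h0, sub_zero] at h2
    have h3 : (∫ t in Ioc 0 s₀, g t ^ 2) ≤ E1 := by
      refine setIntegral_mono_set (hgsq_int _ Ioc_subset_Ioi_self) ?_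
        (HasSubset.Subset.eventuallyLE (Ioc_subset_Ioc_right hs₀1))
      filter_upwards with x using sq_nonneg _
    have h4 : ε ^ 2 ≤ u s₀ ^ 2 := pow_le_pow_left₀ hε0.le h1 2
    have h5 : s₀ ≤ ε ^ 2 / (2 * (E1 + 1)) := min_le_right _ _
    have h6 : s₀ * (∫ t in Ioc 0 s₀, g t ^ 2) ≤ s₀ * E1 :=
      mul_le_mul_of_nonneg_left h3 hs₀pos.le
    have h7 : s₀ * E1 ≤ ε ^ 2 / (2 * (E1 + 1)) * E1 :=
      mul_le_mul_of_nonneg_right h5 hE1nn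
    have h8 : ε ^ 2 / (2 * (E1 + 1)) * E1 < ε ^ 2 := by
      rw [div_mul_eq_mul_div, div_lt_iff₀ (by positivity)]
      nlinarith
    simp only [sub_zero] at h2
    nlinarith
  -- u a = ε
  have hIoia_sub : Ioi a ⊆ Ioi 0 := Ioi_subset_Ioi ha0
  have hua : u a = ε := by
    refine le_antisymm ?_ ?_
    · by_contra hcon
      push_neg at hcon
      set η := u a - ε with hηdef
      have hηpos : 0 < η := sub_pos.2 hcon
      set Eg := ∫ t in Ioc (0:ℝ) a, g t ^ 2 with hEgdef
      have hEgnn : 0 ≤ Eg := setIntegral_nonneg measurableSet_Ioc fun x _ => sq_nonneg _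
      set δ := min (a / 2) (η ^ 2 / (2 * (Eg + 1))) with hδdef
      have hδpos : 0 < δ := lt_min (by linarith) (by positivity)
      have hδa : δ ≤ a / 2 := min_le_left _ _
      have h1 : u (a - δ) < ε := hlta _ (by linarith) (by linarith)
      have h2 := hcs (a - δ) a (by linarith) (by linarith)
      have h3 : (∫ t in Ioc (a - δ) a, g t ^ 2) ≤ Eg := by
        refine setIntegral_mono_set (hgsq_int _ Ioc_subset_Ioi_self) ?_
          (HasSubset.Subset.eventuallyLE (Ioc_subset_Ioc_left (by linarith)))
        filter_upwards with x using sq_nonneg _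
      have h4 : η ≤ u a - u (a - δ) := by linarith
      have h5 : η ^ 2 ≤ (u a - u (a - δ)) ^ 2 := pow_le_pow_left₀ hηpos.le h4 2
      have h6 : a - (a - δ) = δ := by ring
      rw [h6] at h2
      have h7 : δ ≤ η ^ 2 / (2 * (Eg + 1)) := min_le_right _ _
      have h8 : δ * (∫ t in Ioc (a - δ) a, g t ^ 2) ≤ δ * Eg :=
        mul_le_mul_of_nonneg_left h3 hδpos.le
      have h9 : δ * Eg ≤ η ^ 2 / (2 * (Eg + 1)) * Eg := mul_le_mul_of_nonneg_right h7 hEgnn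
      have h10 : η ^ 2 / (2 * (Eg + 1)) * Eg < η ^ 2 := by
        rw [div_mul_eq_mul_div, div_lt_iff₀ (by positivity)]
        nlinarith
      nlinarith
    · by_contra hcon
      push_neg at hcon
      set η := ε - u a with hηdef
      have hηpos : 0 < η := sub_pos.2 hcon
      set Tg := ∫ t in Ioi a, g t ^ 2 with hTgdef
      have hTgnn : 0 ≤ Tg := setIntegral_nonneg measurableSet_Ioi fun x _ => sq_nonneg _
      set δ := η ^ 2 / (2 * (Tg + 1)) with hδdef
      have hδpos : 0 < δ := by positivity
      have h1 : ε ≤ u (a + δ) := hgea _ (by linarith)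
      have h2 := hcs a (a + δ) ha0 (by linarith)
      have h3 : (∫ t in Ioc a (a + δ), g t ^ 2) ≤ Tg := by
        refine setIntegral_mono_set (hgsq_int _ hIoia_sub) ?_
          (HasSubset.Subset.eventuallyLE Ioc_subset_Ioi_self)
        filter_upwards with x using sq_nonneg _
      have h4 : η ≤ u (a + δ) - u a := by linarith
      have h5 : η ^ 2 ≤ (u (a + δ) - u a) ^ 2 := pow_le_pow_left₀ hηpos.le h4 2
      have h6 : a + δ - a = δ := by ring
      rw [h6] at h2
      have h8 : δ * (∫ t in Ioc a (a + δ), g t ^ 2) ≤ δ * Tg :=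
        mul_le_mul_of_nonneg_left h3 hδpos.le
      have h10 : δ * Tg < η ^ 2 := by
        rw [hδdef, div_mul_eq_mul_div, div_lt_iff₀ (by positivity)]
        nlinarith
      nlinarith
  -- split the Dirichlet integral
  set D := ∫ s in Ioi (0:ℝ), u' s ^ 2 with hDdef
  set T := ∫ s in Ioi a, u' s ^ 2 with hTdef
  set E := ∫ s in Ioc (0:ℝ) a, u' s ^ 2 with hEdef
  have hTnn : 0 ≤ T := setIntegral_nonneg measurableSet_Ioi fun x _ => sq_nonneg _
  have hsplitD : D = E + T := by
    rw [hDdef, ← Ioc_union_Ioi_eq_Ioi ha0,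
      setIntegral_union (Ioc_disjoint_Ioi le_rfl) measurableSet_Ioi
        (hden.mono_set Ioc_subset_Ioi_self) (hden.mono_set hIoia_sub)]
  set β := ε ^ 2 / a with hβdef
  have hβpos : 0 < β := by positivity
  have hEβ : β ≤ E := by
    have h2 := hcs 0 a le_rfl ha0
    rw [h0, sub_zero, hua, sub_zero] at h2
    have h3 : (∫ t in Ioc (0:ℝ) a, g t ^ 2) = E := hgsq_eq _ Ioc_subset_Ioi_self
    rw [h3] at h2
    rw [hβdef, div_le_iff₀ hapos]
    linarith
  -- the comparison function
  set φ : ℝ → ℝ := fun s => ∫ t in Ioc a s, g t with hφdef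
  have hφmono : Monotone φ := by
    intro s s' hss'
    refine setIntegral_mono_set (hg_int a s' ha0) ?_
      (HasSubset.Subset.eventuallyLE (Ioc_subset_Ioc_right hss'))
    filter_upwards with x using hg0 x
  have hφmeas : Measurable φ := hφmono.measurable
  have hφnn : ∀ s, 0 ≤ φ s := fun s => setIntegral_nonneg measurableSet_Ioc fun x _ => hg0 x
  have hφa : φ a = 0 := by simp [hφdef]
  set h : ℝ → ℝ := fun t => if φ t < 1 - ε then g t else 0 with hhdef
  have hhmeas : Measurable h :=
    Measurable.ite (measurableSet_lt hφmeas measurable_const) hgmeas measurable_const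
  have hh0 : ∀ x, 0 ≤ h x := by
    intro x; rw [hhdef]; dsimp only; split
    · exact hg0 x
    · exact le_rfl
  have hhg : ∀ x, h x ≤ g x := by
    intro x; rw [hhdef]; dsimp only; split
    · exact le_rfl
    · exact hg0 x
  have hhsq : ∀ x, h x ^ 2 ≤ g x ^ 2 := by
    intro x
    have := hh0 x
    have := hhg x
    nlinarith
  have hh_int : ∀ A B : ℝ, 0 ≤ A → IntegrableOn h (Ioc A B) := by
    intro A B hA
    refine Integrable.mono (hg_int A B hA) hhmeas.aestronglyMeasurable ?_
    filter_upwards with x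
    rw [Real.norm_eq_abs, Real.norm_eq_abs, abs_of_nonneg (hh0 x), abs_of_nonneg (hg0 x)]
    exact hhg x
  have hhsq_int : IntegrableOn (fun t => h t ^ 2) (Ioi a) := by
    refine Integrable.mono (hgsq_int _ hIoia_sub) (hhmeas.pow_const 2).aestronglyMeasurable ?_
    filter_upwards with x
    rw [Real.norm_eq_abs, Real.norm_eq_abs, abs_of_nonneg (sq_nonneg _),
      abs_of_nonneg (sq_nonneg _)]
    exact hhsq x
  set ψ : ℝ → ℝ := fun s => ∫ t in Ioc a s, h t with hψdef
  have hψmono : Monotone ψ := by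
    intro s s' hss'
    refine setIntegral_mono_set (hh_int a s' ha0) ?_
      (HasSubset.Subset.eventuallyLE (Ioc_subset_Ioc_right hss'))
    filter_upwards with x using hh0 x
  have hψmeas : Measurable ψ := hψmono.measurable
  have hψnn : ∀ s, 0 ≤ ψ s := fun s => setIntegral_nonneg measurableSet_Ioc fun x _ => hh0 x
  -- representation of ψ as a truncation
  have hψeq : ∀ s, a ≤ s → ψ s = min (φ s) (1 - ε) := by
    intro s has
    rcases lt_or_ge (φ s) (1 - ε) with hcase | hcase
    · rw [min_eq_left hcase.le, hψdef, hφdef]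
      apply setIntegral_congr_fun measurableSet_Ioc
      intro t ht
      have : φ t < 1 - ε := lt_of_le_of_lt (hφmono ht.2) hcase
      simp only [hhdef, if_pos this]
    · rw [min_eq_right hcase]
      have hφcont : ContinuousOn φ (Icc a s) := by
        have hint : IntegrableOn g (Icc a s) := by
          rw [integrableOn_Icc_iff_integrableOn_Ioc]
          exact hg_int a s ha0
        exact intervalIntegral.continuousOn_primitive hint
      obtain ⟨c, hcmem, hφc⟩ : ∃ c ∈ Icc a s, φ c = 1 - ε := by
        have h1 := intermediate_value_Icc has hφcont
        have h2 : (1 - ε) ∈ Icc (φ a) (φ s) := by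
          rw [hφa]; exact ⟨by linarith, hcase⟩
        obtain ⟨c, hc1, hc2⟩ := h1 h2
        exact ⟨c, hc1, hc2⟩
      set R := {t | t ∈ Icc a s ∧ φ t = 1 - ε} with hRdef
      have hRne : R.Nonempty := ⟨c, hcmem, hφc⟩
      have hRbdd : BddBelow R := ⟨a, fun t ht => ht.1.1⟩
      have hRclosed : IsClosed R := by
        have : R = Icc a s ∩ φ ⁻¹' {1 - ε} := rfl
        rw [this]
        exact hφcont.preimage_isClosed_of_isClosed isClosed_Icc isClosed_singleton
      have hc₀R : sInf R ∈ R := hRclosed.csInf_mem hRne hRbdd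
      set c₀ := sInf R with hc₀def
      have hc₀a : a < c₀ := by
        rcases hc₀R.1.1.lt_or_eq with hlt | heq
        · exact hlt
        · exfalso
          have h9 := hc₀R.2
          rw [← heq, hφa] at h9
          linarith
      have hc₀s : c₀ ≤ s := hc₀R.1.2
      have hlow : ∀ t, t ∈ Ioo a c₀ → φ t < 1 - ε := by
        intro t ht
        have h1 : φ t ≤ 1 - ε := hc₀R.2 ▸ hφmono ht.2.le
        rcases h1.lt_or_eq with hl | he
        · exact hl
        · exfalso
          have : t ∈ R := ⟨⟨ht.1.le, ht.2.le.trans hc₀s⟩, he⟩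
          exact absurd (csInf_le hRbdd this) (not_le.2 ht.2)
      have hhigh : ∀ t, c₀ ≤ t → ¬(φ t < 1 - ε) := fun t ht =>
        not_lt.2 (hc₀R.2 ▸ hφmono ht)
      have hsplit2 : Ioc a s = Ioo a c₀ ∪ Icc c₀ s :=
        (Ioo_union_Icc_eq_Ioc hc₀a hc₀s).symm
      have h1 : ψ s = (∫ t in Ioo a c₀, h t) + ∫ t in Icc c₀ s, h t := by
        rw [hψdef]
        dsimp only
        rw [hsplit2]
        refine setIntegral_union ?_ measurableSet_Icc ?_ ?_
        · exact disjoint_left.mpr fun x hx hx2 => absurd hx2.1 (not_le.2 hx.2)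
        · exact ((hh_int a c₀ ha0).mono_set Ioo_subset_Ioc_self)
        · refine ((hh_int c₀ s (ha0.trans hc₀a.le)).mono_set ?_).congr_set_ae
            Ioc_ae_eq_Icc.symm
          exact le_rfl
      have h2 : (∫ t in Ioo a c₀, h t) = ∫ t in Ioo a c₀, g t := by
        apply setIntegral_congr_fun measurableSet_Ioo
        intro t ht
        simp only [hhdef, if_pos (hlow t ht)]
      have h3 : (∫ t in Icc c₀ s, h t) = 0 := by
        rw [setIntegral_congr_fun measurableSet_Icc
          (g := fun _ => (0:ℝ)) fun t ht => by simp only [hhdef, if_neg (hhigh t ht.1)]]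
        simp
      have h4 : (∫ t in Ioo a c₀, g t) = φ c₀ := by
        rw [hφdef]
        exact (integral_Ioc_eq_integral_Ioo).symm
      rw [h1, h2, h3, h4, hc₀R.2, add_zero]
  have hψle : ∀ s, a ≤ s → ψ s ≤ 1 - ε := by
    intro s hs; rw [hψeq s hs]; exact min_le_right _ _
  have hψle' : ∀ t, ψ t ≤ 1 - ε := by
    intro t
    rcases le_or_gt a t with hta | hta
    · exact hψle t hta
    · have he : Ioc a t = ∅ := Ioc_eq_empty (not_lt.2 hta.le)
      simp only [hψdef, he, Measure.restrict_empty, integral_zero_measure]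
      linarith
  set vv : ℝ → ℝ := fun t => ε + ψ t with hvvdef
  have hvvmeas : Measurable vv := measurable_const.add hψmeas
  have hvv1 : ∀ t, vv t ≤ 1 := fun t => by have := hψle' t; simp only [hvvdef]; linarith
  have hvvε : ∀ t, ε ≤ vv t := fun t => by have := hψnn t; simp only [hvvdef]; linarith
  have hvv0 : ∀ t, 0 ≤ vv t := fun t => le_trans hε0.le (hvvε t)
  -- integrability of h times a bounded function
  have hIhw : ∀ (w : ℝ → ℝ), Measurable w → (∀ t, 0 ≤ w t) → (∀ t, w t ≤ 1) →
      ∀ s', IntegrableOn (fun t => h t * w t) (Ioc a s') := by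
    intro w hwm hw0 hw1 s'
    refine Integrable.mono (hg_int a s' ha0) (hhmeas.mul hwm).aestronglyMeasurable ?_
    filter_upwards with t
    rw [Real.norm_eq_abs, Real.norm_eq_abs, abs_of_nonneg (mul_nonneg (hh0 t) (hw0 t)),
      abs_of_nonneg (hg0 t)]
    calc h t * w t ≤ h t * 1 := mul_le_mul_of_nonneg_left (hw1 t) (hh0 t)
      _ = h t := mul_one _
      _ ≤ g t := hhg t
  have hIψ : ∀ s', IntegrableOn (fun t => h t * ψ t) (Ioc a s') :=
    hIhw ψ hψmeas hψnn fun t => by linarith [hψle' t]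
  have hIvv : ∀ s', IntegrableOn (fun t => h t * vv t) (Ioc a s') :=
    hIhw vv hvvmeas hvv0 hvv1
  -- pointwise Fubini identity
  have hkey1 : ∀ s, a ≤ s → ψ s ^ 2 = 2 * ∫ t in Ioc a s, h t * ψ t := by
    intro s has
    set I := Ioc a s with hIdef
    set F : ℝ → ℝ → ℝ := fun r t => if r < t then h r * h t else 0 with hFdef
    have hFmeas : Measurable (Function.uncurry F) := by
      refine Measurable.ite (measurableSet_lt measurable_fst measurable_snd) ?_
        measurable_const
      exact (hhmeas.comp measurable_fst).mul (hhmeas.comp measurable_snd)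
    have hFint : Integrable (Function.uncurry F)
        ((volume.restrict I).prod (volume.restrict I)) := by
      refine Integrable.mono (Integrable.mul_prod (hh_int a s ha0) (hh_int a s ha0))
        hFmeas.aestronglyMeasurable ?_
      filter_upwards with p
      by_cases hp : p.1 < p.2
      · simp only [Function.uncurry, hFdef, if_pos hp]; exact le_rfl
      · simp only [Function.uncurry, hFdef, if_neg hp]
        simp only [norm_zero, norm_nonneg]
    have hinner1 : ∀ r ∈ I, (∫ t in I, F r t) = h r * (ψ s - ψ r) := by
      intro r hr
      have e1 : ∀ t, F r t = (Ioi r).indicator (fun t' => h r * h t') t := by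
        intro t
        by_cases hrt : r < t
        · simp only [hFdef, if_pos hrt, indicator_of_mem (mem_Ioi.2 hrt)]
        · simp only [hFdef, if_neg hrt, indicator_of_notMem (fun hc => hrt (mem_Ioi.1 hc))]
      rw [integral_congr_ae (Eventually.of_forall e1), setIntegral_indicator measurableSet_Ioi]
      have e2 : I ∩ Ioi r = Ioc r s := by
        ext x
        constructor
        · intro hx; exact ⟨hx.2, hx.1.2⟩
        · intro hx; exact ⟨⟨hr.1.trans hx.1, hx.2⟩, hx.1⟩
      rw [e2, integral_const_mul]
      have e3 : ψ s = ψ r + ∫ t in Ioc r s, h t := by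
        simp only [hψdef]
        rw [← Ioc_union_Ioc_eq_Ioc hr.1.le hr.2,
          setIntegral_union (Ioc_disjoint_Ioc_of_le le_rfl) measurableSet_Ioc
            (hh_int a r ha0) (hh_int r s (ha0.trans hr.1.le))]
      rw [e3]; ring
    have hinner2 : ∀ t ∈ I, (∫ r in I, F r t) = h t * ψ t := by
      intro t ht
      have e1 : ∀ r, F r t = (Iio t).indicator (fun r' => h r' * h t) r := by
        intro r
        by_cases hrt : r < t
        · simp only [hFdef, if_pos hrt, indicator_of_mem (mem_Iio.2 hrt)]
        · simp only [hFdef, if_neg hrt, indicator_of_notMem (fun hc => hrt (mem_Iio.1 hc))]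
      rw [integral_congr_ae (Eventually.of_forall e1), setIntegral_indicator measurableSet_Iio]
      have e2 : I ∩ Iio t = Ioo a t := by
        ext x
        constructor
        · intro hx; exact ⟨hx.1.1, hx.2⟩
        · intro hx; exact ⟨⟨hx.1, hx.2.le.trans ht.2⟩, hx.2⟩
      rw [e2, integral_mul_const]
      have e3 : (∫ r' in Ioo a t, h r') = ψ t := by
        simp only [hψdef]; exact integral_Ioc_eq_integral_Ioo.symm
      rw [e3, mul_comm]
    have hAB : (∫ r in I, h r * (ψ s - ψ r)) = ∫ t in I, h t * ψ t := by
      calc (∫ r in I, h r * (ψ s - ψ r)) = ∫ r in I, ∫ t in I, F r t :=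
            setIntegral_congr_fun measurableSet_Ioc fun r hr => (hinner1 r hr).symm
        _ = ∫ t in I, ∫ r in I, F r t := integral_integral_swap hFint
        _ = ∫ t in I, h t * ψ t := setIntegral_congr_fun measurableSet_Ioc hinner2
    have hexp : (∫ r in I, h r * (ψ s - ψ r)) = ψ s * ψ s - ∫ r in I, h r * ψ r := by
      have e4 : ∀ r, h r * (ψ s - ψ r) = ψ s * h r - h r * ψ r := fun r => by ring
      rw [integral_congr_ae (Eventually.of_forall e4),
        integral_sub ((hh_int a s ha0).const_mul (ψ s)) (hIψ s), integral_const_mul]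
    rw [hexp] at hAB
    rw [pow_two]
    linarith
  have hkey2 : ∀ s, a ≤ s → vv s ^ 2 - ε ^ 2 = 2 * ∫ t in Ioc a s, h t * vv t := by
    intro s has
    have h1 := hkey1 s has
    have h2 : (∫ t in Ioc a s, h t * vv t)
        = ε * ψ s + ∫ t in Ioc a s, h t * ψ t := by
      have e1 : ∀ t, h t * vv t = ε * h t + h t * ψ t := fun t => by
        simp only [hvvdef]; ring
      rw [integral_congr_ae (Eventually.of_forall e1),
        integral_add ((hh_int a s ha0).const_mul ε) (hIψ s), integral_const_mul]
    simp only [hvvdef]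
    rw [h2]
    nlinarith [h1]
  -- the truncated numerator on (a, ∞)
  set nn := ∫ s in Ioi a, (vv s ^ 2 - ε ^ 2) / s ^ 2 with hnndef
  have hvvsq : ∀ s, ε ^ 2 ≤ vv s ^ 2 := fun s => pow_le_pow_left₀ hε0.le (hvvε s) 2
  have hvvsq1 : ∀ s, vv s ^ 2 ≤ 1 := fun s => by nlinarith [hvv1 s, hvv0 s]
  have hintmeas : Measurable (fun s => (vv s ^ 2 - ε ^ 2) / s ^ 2) :=
    ((hvvmeas.pow_const 2).sub measurable_const).div (measurable_id.pow_const 2)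
  have hint_nn : IntegrableOn (fun s => (vv s ^ 2 - ε ^ 2) / s ^ 2) (Ioi a) := by
    refine Integrable.mono ((inv_sq_integrableOn hapos).const_mul (1 - ε ^ 2))
      hintmeas.aestronglyMeasurable ?_
    filter_upwards [ae_restrict_mem measurableSet_Ioi] with x hx
    have hx0 : 0 < x := hapos.trans hx
    rw [Real.norm_eq_abs, Real.norm_eq_abs,
      abs_of_nonneg (mul_nonneg (by nlinarith : (0:ℝ) ≤ 1 - ε ^ 2)
        (by positivity : (0:ℝ) ≤ 1 / x ^ 2)),
      abs_of_nonneg (div_nonneg (by linarith [hvvsq x]) (sq_nonneg x))]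
    rw [div_eq_mul_one_div]
    exact mul_le_mul_of_nonneg_right (by linarith [hvvsq1 x]) (by positivity)
  have hnn_nn : 0 ≤ nn := setIntegral_nonneg measurableSet_Ioi fun x hx =>
    div_nonneg (by linarith [hvvsq x]) (sq_nonneg x)
  have hnn_le : nn ≤ (1 - ε ^ 2) * (1 / a) := by
    have step : nn ≤ ∫ s in Ioi a, (1 - ε ^ 2) * (1 / s ^ 2) := by
      refine setIntegral_mono_on hint_nn ((inv_sq_integrableOn hapos).const_mul _)
        measurableSet_Ioi ?_
      intro x hx
      rw [div_eq_mul_one_div]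
      exact mul_le_mul_of_nonneg_right (by linarith [hvvsq1 x]) (by positivity)
    rw [integral_const_mul, inv_sq_integral hapos] at step
    exact step
  -- improper Fubini
  set F2 : ℝ → ℝ → ℝ := fun s t => if t ≤ s then h t * vv t / s ^ 2 else 0 with hF2def
  have hF2meas : Measurable (Function.uncurry F2) := by
    refine Measurable.ite (measurableSet_le measurable_snd measurable_fst) ?_ measurable_const
    exact ((hhmeas.comp measurable_snd).mul (hvvmeas.comp measurable_snd)).div
      (measurable_fst.pow_const 2)
  have hsect : ∀ s, (fun t => F2 s t) = (Iic s).indicator (fun t => h t * vv t / s ^ 2) := by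
    intro s
    funext t
    by_cases hts : t ≤ s
    · simp only [hF2def, if_pos hts, indicator_of_mem (mem_Iic.2 hts)]
    · simp only [hF2def, if_neg hts, indicator_of_notMem (fun hc => hts (mem_Iic.1 hc))]
  have hIicIoi : ∀ s : ℝ, Iic s ∩ Ioi a = Ioc a s := by
    intro s; ext x; exact ⟨fun hx => ⟨hx.2, hx.1⟩, fun hx => ⟨hx.2, hx.1⟩⟩
  have hinnersum : ∀ s, (∫ t in Ioi a, F2 s t) = (∫ t in Ioc a s, h t * vv t) / s ^ 2 := by
    intro s
    rw [hsect s, setIntegral_indicator measurableSet_Iic]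
    rw [show Ioi a ∩ Iic s = Ioc a s by rw [inter_comm]; exact hIicIoi s]
    rw [integral_div]
  have hIvv_le : ∀ s, s ∈ Ioi a → (∫ t in Ioc a s, h t * vv t) ≤ 1 - ε := by
    intro s hs
    have step : (∫ t in Ioc a s, h t * vv t) ≤ ∫ t in Ioc a s, h t := by
      refine setIntegral_mono_on (hIvv s) (hh_int a s ha0) measurableSet_Ioc ?_
      intro t _
      calc h t * vv t ≤ h t * 1 := mul_le_mul_of_nonneg_left (hvv1 t) (hh0 t)
        _ = h t := mul_one _
    calc (∫ t in Ioc a s, h t * vv t) ≤ ψ s := step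
      _ ≤ 1 - ε := hψle' s
  have hIvv_nonneg : ∀ s, 0 ≤ ∫ t in Ioc a s, h t * vv t := fun s =>
    setIntegral_nonneg measurableSet_Ioc fun t _ => mul_nonneg (hh0 t) (hvv0 t)
  have hF2int : Integrable (Function.uncurry F2)
      ((volume.restrict (Ioi a)).prod (volume.restrict (Ioi a))) := by
    rw [integrable_prod_iff hF2meas.aestronglyMeasurable]
    constructor
    · refine ae_of_all _ fun s => ?_
      show Integrable (fun t => F2 s t) (volume.restrict (Ioi a))
      rw [hsect s, integrable_indicator_iff measurableSet_Iic]
      rw [IntegrableOn, Measure.restrict_restrict measurableSet_Iic, hIicIoi s]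
      exact (hIvv s).div_const _
    · refine Integrable.mono ((inv_sq_integrableOn hapos).const_mul (1 - ε))
        (hF2meas.norm.aestronglyMeasurable.integral_prod_right') ?_
      filter_upwards [ae_restrict_mem measurableSet_Ioi] with s hs
      have hs0 : 0 < s := hapos.trans hs
      have e1 : (fun t => ‖Function.uncurry F2 (s, t)‖) = fun t => F2 s t := by
        funext t
        have h9 : (0:ℝ) ≤ F2 s t := by
          rw [hF2def]
          dsimp only
          split
          · exact div_nonneg (mul_nonneg (hh0 t) (hvv0 t)) (sq_nonneg s)
          · exact le_rfl
        show ‖F2 s t‖ = F2 s t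
        rw [Real.norm_eq_abs, abs_of_nonneg h9]
      rw [Real.norm_eq_abs, Real.norm_eq_abs,
        abs_of_nonneg (mul_nonneg (by linarith : (0:ℝ) ≤ 1 - ε)
          (by positivity : (0:ℝ) ≤ 1 / s ^ 2))]
      rw [show (∫ t, ‖Function.uncurry F2 (s, t)‖ ∂volume.restrict (Ioi a))
          = ∫ t in Ioi a, F2 s t by rw [e1]]
      rw [hinnersum s, abs_of_nonneg (div_nonneg (hIvv_nonneg s) (sq_nonneg s))]
      rw [div_eq_mul_one_div]
      exact mul_le_mul_of_nonneg_right (hIvv_le s hs) (by positivity)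
  have hswap2 := integral_integral_swap hF2int
  have hLHS : (∫ s in Ioi a, ∫ t in Ioi a, F2 s t) = nn / 2 := by
    have e1 : ∀ s, s ∈ Ioi a → (∫ t in Ioi a, F2 s t) = ((vv s ^ 2 - ε ^ 2) / s ^ 2) / 2 := by
      intro s hs
      rw [hinnersum s]
      have e2 : (∫ t in Ioc a s, h t * vv t) = (vv s ^ 2 - ε ^ 2) / 2 := by
        have h9 := hkey2 s (le_of_lt hs)
        rw [eq_div_iff (by norm_num : (2:ℝ) ≠ 0), h9]
        ring
      rw [e2]
      ring
    rw [setIntegral_congr_fun measurableSet_Ioi e1, integral_div, hnndef]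
  have hRHS : (∫ t in Ioi a, ∫ s in Ioi a, F2 s t)
      = ∫ t in Ioi a, h t * (vv t * (1 / t)) := by
    refine setIntegral_congr_fun measurableSet_Ioi fun t ht => ?_
    have ht0 : 0 < t := hapos.trans ht
    have e1 : ∀ s, F2 s t = (Ici t).indicator (fun s' => h t * vv t / s' ^ 2) s := by
      intro s
      by_cases hts : t ≤ s
      · simp only [hF2def, if_pos hts, indicator_of_mem (mem_Ici.2 hts)]
      · simp only [hF2def, if_neg hts, indicator_of_notMem (fun hc => hts (mem_Ici.1 hc))]
    rw [integral_congr_ae (Eventually.of_forall e1), setIntegral_indicator measurableSet_Ici]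
    rw [show Ioi a ∩ Ici t = Ici t from
      inter_eq_self_of_subset_right fun x hx => mem_Ioi.2 (lt_of_lt_of_le ht (mem_Ici.1 hx))]
    rw [integral_Ici_eq_integral_Ioi]
    have e2 : ∀ s' : ℝ, h t * vv t / s' ^ 2 = (h t * vv t) * (1 / s' ^ 2) := fun s' => by ring
    rw [integral_congr_ae (Eventually.of_forall e2), integral_const_mul, inv_sq_integral ht0]
    ring
  have hW : nn = 2 * ∫ t in Ioi a, h t * (vv t * (1 / t)) := by
    rw [← hRHS, ← hswap2, hLHS]
    ring
  -- Cauchy-Schwarz on (a, ∞)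
  set T' := ∫ t in Ioi a, h t ^ 2 with hT'def
  have hT'nn : 0 ≤ T' := setIntegral_nonneg measurableSet_Ioi fun t _ => sq_nonneg _
  have hT'T : T' ≤ T := by
    rw [hT'def, hTdef, ← hgsq_eq _ hIoia_sub]
    exact integral_mono hhsq_int (hgsq_int _ hIoia_sub) hhsq
  have hkmeas : Measurable (fun t : ℝ => vv t * (1 / t)) :=
    hvvmeas.mul (measurable_const.div measurable_id)
  have hk2int : Integrable (fun t => (vv t * (1 / t)) ^ 2) (volume.restrict (Ioi a)) := by
    refine Integrable.mono (inv_sq_integrableOn hapos)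
      (hkmeas.pow_const 2).aestronglyMeasurable ?_
    filter_upwards [ae_restrict_mem measurableSet_Ioi] with t ht
    have ht0 : 0 < t := hapos.trans ht
    rw [Real.norm_eq_abs, Real.norm_eq_abs, abs_of_nonneg (sq_nonneg _),
      abs_of_nonneg (by positivity : (0:ℝ) ≤ 1 / t ^ 2)]
    have : (vv t * (1 / t)) ^ 2 = vv t ^ 2 * (1 / t ^ 2) := by
      rw [mul_pow]; congr 1; rw [one_div, one_div, ← inv_pow]
    rw [this]
    calc vv t ^ 2 * (1 / t ^ 2) ≤ 1 * (1 / t ^ 2) :=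
          mul_le_mul_of_nonneg_right (hvvsq1 t) (by positivity)
      _ = 1 / t ^ 2 := one_mul _
  have hfk0 : 0 ≤ᵐ[volume.restrict (Ioi a)] fun t => h t * (vv t * (1 / t)) := by
    filter_upwards [ae_restrict_mem measurableSet_Ioi] with t ht
    have ht0 : 0 < t := hapos.trans ht
    exact mul_nonneg (hh0 t) (mul_nonneg (hvv0 t) (by positivity))
  have hCS := cs_integral (μ := volume.restrict (Ioi a)) (f := h)
    (k := fun t => vv t * (1 / t)) hhmeas.aestronglyMeasurable hkmeas.aestronglyMeasurable
    hhsq_int hk2int hfk0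
  have hk2eq : (∫ t in Ioi a, (vv t * (1 / t)) ^ 2) = nn + β := by
    have e1 : ∀ t, t ∈ Ioi a → (vv t * (1 / t)) ^ 2
        = (vv t ^ 2 - ε ^ 2) / t ^ 2 + ε ^ 2 * (1 / t ^ 2) := by
      intro t ht
      have ht0 : 0 < t := hapos.trans ht
      field_simp; ring
    rw [setIntegral_congr_fun measurableSet_Ioi e1,
      integral_add hint_nn ((inv_sq_integrableOn hapos).const_mul _),
      integral_const_mul, inv_sq_integral hapos, hnndef, hβdef]
    rw [mul_one_div]
  rw [hk2eq] at hCS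
  have hkeyineq : nn ^ 2 ≤ 4 * T' * (nn + β) := by
    have hsq : nn ^ 2 = 4 * (∫ t in Ioi a, h t * (vv t * (1 / t))) ^ 2 := by
      rw [hW]; ring
    rw [hsq]
    linarith [hCS]
  -- numerator comparison
  have hNN0 : 0 ≤ ∫ s in Ioi (0:ℝ), max (u s ^ 2 - ε ^ 2) 0 / s ^ 2 :=
    setIntegral_nonneg measurableSet_Ioi fun x _ => div_nonneg (le_max_right _ _) (sq_nonneg _)
  have hNsplit : (∫ s in Ioi (0:ℝ), max (u s ^ 2 - ε ^ 2) 0 / s ^ 2)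
      = ∫ s in Ioi a, max (u s ^ 2 - ε ^ 2) 0 / s ^ 2 := by
    rw [← Ioc_union_Ioi_eq_Ioi ha0,
      setIntegral_union (Ioc_disjoint_Ioi le_rfl) measurableSet_Ioi
        (hnum.mono_set Ioc_subset_Ioi_self) (hnum.mono_set hIoia_sub)]
    have e1 : (∫ s in Ioc (0:ℝ) a, max (u s ^ 2 - ε ^ 2) 0 / s ^ 2) = 0 := by
      rw [setIntegral_congr_fun measurableSet_Ioc (g := fun _ => (0:ℝ)) ?_]
      · simp
      · intro x hx
        have hx0 : 0 ≤ u x := (hmap x hx.1.le).1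
        have hxε : u x ≤ ε := by
          rcases hx.2.lt_or_eq with hlt | heqq
          · exact (hlta x hx.1 hlt).le
          · rw [heqq, hua]
        have : max (u x ^ 2 - ε ^ 2) 0 = 0 := by
          rw [max_eq_right]
          nlinarith
        show max (u x ^ 2 - ε ^ 2) 0 / x ^ 2 = (0:ℝ)
        rw [this, zero_div]
    rw [e1, zero_add]
  have hNle : (∫ s in Ioi a, max (u s ^ 2 - ε ^ 2) 0 / s ^ 2) ≤ nn := by
    refine setIntegral_mono_on (hnum.mono_set hIoia_sub) hint_nn measurableSet_Ioi ?_
    intro s hs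
    have hs0 : 0 < s := hapos.trans hs
    have h1 : ε ≤ u s := hgea s hs
    have h2 : u s ≤ vv s := by
      have h3 := hinc a s ha0 (le_of_lt hs)
      rw [hua] at h3
      have h4 : u s - ε ≤ φ s := h3
      have h5 : u s ≤ 1 := (hmap s hs0.le).2
      have h6 : ψ s = min (φ s) (1 - ε) := hψeq s (le_of_lt hs)
      simp only [hvvdef]
      rw [h6]
      have h7 : u s - ε ≤ min (φ s) (1 - ε) := le_min h4 (by linarith)
      linarith
    show max (u s ^ 2 - ε ^ 2) 0 / s ^ 2 ≤ (vv s ^ 2 - ε ^ 2) / s ^ 2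
    have h7 : max (u s ^ 2 - ε ^ 2) 0 ≤ vv s ^ 2 - ε ^ 2 := by
      refine max_le ?_ ?_
      · have h8 : u s ^ 2 ≤ vv s ^ 2 := pow_le_pow_left₀ ((hmap s hs0.le).1) h2 2
        linarith
      · linarith [hvvsq s]
    exact (div_le_div_iff_of_pos_right (by positivity)).2 h7
  -- final algebra
  have hβT : 0 < β + T' := by linarith
  have hβTD : β + T' ≤ D := by rw [hsplitD]; linarith
  have hNN_le_nn : (∫ s in Ioi (0:ℝ), max (u s ^ 2 - ε ^ 2) 0 / s ^ 2) ≤ nn := by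
    rw [hNsplit]; exact hNle
  have hA : 0 ≤ β * (1 - ε ^ 2) - nn * ε ^ 2 := by
    have h1 : nn * ε ^ 2 ≤ (1 - ε ^ 2) * (1 / a) * ε ^ 2 :=
      mul_le_mul_of_nonneg_right hnn_le (sq_nonneg ε)
    have h2 : (1 - ε ^ 2) * (1 / a) * ε ^ 2 = ε ^ 2 / a * (1 - ε ^ 2) := by ring
    have h3 : β = ε ^ 2 / a := hβdef
    linarith
  have hfac : nn * (nn + β) * (1 + ε ^ 2) ^ 2 ≤ (1 - ε ^ 2) * (nn + 2 * β) ^ 2 := by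
    have hB : (0:ℝ) ≤ (3 + ε ^ 2) * nn + 4 * β := by nlinarith
    have hid : (1 - ε ^ 2) * (nn + 2 * β) ^ 2 - nn * (nn + β) * (1 + ε ^ 2) ^ 2
        = (β * (1 - ε ^ 2) - nn * ε ^ 2) * ((3 + ε ^ 2) * nn + 4 * β) := by ring
    linarith [mul_nonneg hA hB]
  have h4a : (nn + 2 * β) ^ 2 ≤ 4 * (β + T') * (nn + β) := by
    have hexp : 4 * (β + T') * (nn + β) - (nn + 2 * β) ^ 2
        = 4 * T' * (nn + β) - nn ^ 2 := by ring
    linarith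
  have hε2 : (0:ℝ) ≤ 1 - ε ^ 2 := by nlinarith
  have h4 : (1 - ε ^ 2) * (nn + 2 * β) ^ 2 ≤ (1 - ε ^ 2) * (4 * (β + T') * (nn + β)) :=
    mul_le_mul_of_nonneg_left h4a hε2
  have hposnb : 0 < nn + β := by linarith
  have hgoal : nn * (1 + ε ^ 2) ^ 2 ≤ 4 * (1 - ε ^ 2) * (β + T') := by
    have h5 : nn * (1 + ε ^ 2) ^ 2 * (nn + β) ≤ 4 * (1 - ε ^ 2) * (β + T') * (nn + β) := by
      have hexp2 : nn * (1 + ε ^ 2) ^ 2 * (nn + β) = nn * (nn + β) * (1 + ε ^ 2) ^ 2 := by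
        ring
      have hexp3 : (1 - ε ^ 2) * (4 * (β + T') * (nn + β))
          = 4 * (1 - ε ^ 2) * (β + T') * (nn + β) := by ring
      linarith
    exact le_of_mul_le_mul_right h5 hposnb
  calc (1 / 2) * (∫ s in Ioi (0:ℝ), max (u s ^ 2 - ε ^ 2) 0 / s ^ 2) / D
      ≤ (1 / 2) * (nn / (β + T')) := by
        rw [mul_div_assoc]
        refine mul_le_mul_of_nonneg_left ?_ (by norm_num)
        exact div_le_div₀ hnn_nn hNN_le_nn hβT hβTD
    _ ≤ 2 * (1 - ε ^ 2) / (1 + ε ^ 2) ^ 2 := by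
        have e : (1 / 2) * (nn / (β + T')) = nn / (2 * (β + T')) := by
          field_simp
        rw [e, div_le_div_iff₀ (by linarith) (by positivity)]
        have hexp4 : 2 * (1 - ε ^ 2) * (2 * (β + T')) = 4 * (1 - ε ^ 2) * (β + T') := by ring
        linarith
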